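/- Let ρ be a positive definite Hermitian n×n complex matrix (n ≥ 2) having at least two distinct eigenvalues. Then there exists a Hermitian n×n matrix X such that Tr[ [X,ρ] (ln ρ) X ] > 0. Moreover X can be chosen with support contained in the two-dimensional span of two eigenvectors of ρ corresponding to distinct eigenvalues. -/
import Mathlib

open Matrix BigOperators ComplexOrder

lemma vmv_mul {n : ℕ} (a b c d : Fin n → ℂ) :
    vecMulVec a b * vecMulVec c d = (b ⬝ᵥ c) • vecMulVec a d := by
  ext i j
  simp [Matrix.mul_apply, vecMulVec_apply, dotProduct, Finset.mul_sum, Finset.sum_mul]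
  congr 1; ext x; ring

lemma vmv_trace {n : ℕ} (a b : Fin n → ℂ) :
    Matrix.trace (vecMulVec a b) = b ⬝ᵥ a := by
  simp [Matrix.trace, Matrix.diag, vecMulVec_apply, dotProduct, mul_comm]

lemma vmv_conjT {n : ℕ} (a b : Fin n → ℂ) :
    (vecMulVec a b)ᴴ = vecMulVec (star b) (star a) := by
  ext i j
  simp [conjTranspose_apply, vecMulVec_apply, mul_comm]

/-- If `ρ = ∑ i, r i • |e i⟩⟨e i|` is a positive definite Hermitian `n × n`
matrix (`n ≥ 2`) with at least two distinct eigenvalues, then there is a Hermitian `X`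
with `Tr[[X,ρ] (ln ρ) X] > 0` (in particular real); moreover `X` can be chosen supported
on the two-dimensional span of two eigenvectors of `ρ` with distinct eigenvalues. -/
theorem stmt_12 {n : ℕ} (hn : 2 ≤ n) (ρ : Matrix (Fin n) (Fin n) ℂ)
    (hρ : ρ.PosDef)
    (r : Fin n → ℝ) (e : Fin n → (Fin n → ℂ))
    (he : ∀ i j, star (e i) ⬝ᵥ e j = if i = j then (1 : ℂ) else 0)
    (hρd : ρ = ∑ i, (r i : ℂ) • vecMulVec (e i) (star (e i)))
    (hrpos : ∀ i, 0 < r i)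
    (L : Matrix (Fin n) (Fin n) ℂ)
    (hL : L = ∑ i, (Real.log (r i) : ℂ) • vecMulVec (e i) (star (e i)))
    (hdistinct : ∃ k l, r k ≠ r l) :
    ∃ X : Matrix (Fin n) (Fin n) ℂ, Xᴴ = X
      ∧ (Matrix.trace ((X * ρ - ρ * X) * L * X)).im = 0
      ∧ 0 < (Matrix.trace ((X * ρ - ρ * X) * L * X)).re
      ∧ ∃ k l, r k ≠ r l ∧ ∃ a b c d : ℂ,
          X = a • vecMulVec (e k) (star (e k)) + b • vecMulVec (e k) (star (e l))
            + c • vecMulVec (e l) (star (e k)) + d • vecMulVec (e l) (star (e l)) := by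
  obtain ⟨k, l, hrkl⟩ := hdistinct
  have hkl : k ≠ l := fun h => hrkl (by rw [h])
  set P : Fin n → Fin n → Matrix (Fin n) (Fin n) ℂ :=
    fun i j => vecMulVec (e i) (star (e j)) with hP
  set X : Matrix (Fin n) (Fin n) ℂ := P k l + P l k with hX
  -- commutator
  have hcomm : X * ρ - ρ * X = ((r l : ℂ) - r k) • (P k l - P l k) := by
    rw [hρd, Finset.mul_sum, Finset.sum_mul, hX, hP]
    simp only [add_mul, mul_add, smul_mul_assoc, mul_smul_comm, vmv_mul, he, smul_smul]
    simp only [mul_ite, mul_one, mul_zero, ite_smul, zero_smul, smul_add, add_smul]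
    rw [Finset.sum_add_distrib, Finset.sum_add_distrib]
    simp only [smul_ite, smul_zero, one_smul]
    simp only [Finset.sum_ite_eq, Finset.sum_ite_eq', Finset.mem_univ, if_true]
    module
  -- (P k l - P l k) * L
  have hCL : (P k l - P l k) * L
      = (Real.log (r l) : ℂ) • P k l - (Real.log (r k) : ℂ) • P l k := by
    rw [hL, Finset.mul_sum, hP]
    simp only [sub_mul, smul_mul_assoc, mul_smul_comm, vmv_mul, he, smul_smul]
    simp only [mul_ite, mul_one, mul_zero, ite_smul, zero_smul, smul_sub, sub_smul]
    rw [Finset.sum_sub_distrib]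
    simp only [smul_ite, smul_zero, one_smul]
    simp only [Finset.sum_ite_eq, Finset.sum_ite_eq', Finset.mem_univ, if_true]
  -- times X
  have hmul : ((Real.log (r l) : ℂ) • P k l - (Real.log (r k) : ℂ) • P l k) * X
      = (Real.log (r l) : ℂ) • P k k - (Real.log (r k) : ℂ) • P l l := by
    rw [hX, hP]
    simp only [sub_mul, mul_add, smul_mul_assoc, vmv_mul, he, smul_smul]
    rw [if_neg (fun h => hkl h.symm), if_neg hkl]
    simp only [if_true, zero_smul, smul_zero, zero_add, add_zero, one_smul, smul_add]
    module
  have htr : Matrix.trace ((X * ρ - ρ * X) * L * X)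
      = (((r l - r k) * (Real.log (r l) - Real.log (r k)) : ℝ) : ℂ) := by
    rw [hcomm, smul_mul_assoc, smul_mul_assoc, hCL, hmul, hP]
    rw [Matrix.trace_smul, Matrix.trace_sub, Matrix.trace_smul, Matrix.trace_smul,
      vmv_trace, vmv_trace, he, he]
    simp only [if_true, smul_eq_mul, mul_one]
    push_cast
    ring
  have hspos : 0 < (r l - r k) * (Real.log (r l) - Real.log (r k)) := by
    rcases lt_or_gt_of_ne hrkl with h | h
    · exact mul_pos (by linarith) (by
        have := Real.log_lt_log (hrpos k) h; linarith)
    · exact mul_pos_of_neg_of_neg (by linarith) (by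
        have := Real.log_lt_log (hrpos l) h; linarith)
  refine ⟨X, ?_, by rw [htr]; simp, by rw [htr]; simpa using hspos,
    k, l, hrkl, 0, 1, 1, 0, by rw [hX, hP]; module⟩
  rw [hX, hP, conjTranspose_add, vmv_conjT, vmv_conjT]
  simp [add_comm]
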